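/- Let E be a pseudo effect algebra satisfying (RDP) with S(E) ≠ ∅, and let m be a nonzero Jordan signed measure on E. Then m has a unique canonical Jordan decomposition: there exist real numbers α₁, α₂ ≥ 0 and states s₁, s₂ on E such that m = α₁ s₁ − α₂ s₂, α₁ s₁ = m⁺ and α₂ s₂ = m⁻, where m⁺ = m ⋁ 0 and m⁻ = −(m ⋀ 0) in the lattice J(E); in particular m = m⁺ − m⁻, and for every decomposition m = m₁ − m₂ with m₁, m₂ measures one has m⁺ ≤⁺ m₁ and m⁻ ≤⁺ m₂. -/
import Mathlib


/-- A pseudo effect algebra: a partial algebra `(E; +, 0, 1)` where the partial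
addition is encoded as `padd : E → E → Option E` (`padd a b = some c` means
`a + b` is defined and equals `c`). -/
class PseudoEffectAlgebra (E : Type) where
  padd : E → E → Option E
  pzero : E
  pone : E
  /-- (i) `a+b` and `(a+b)+c` exist iff `b+c` and `a+(b+c)` exist ... -/
  assoc_defined : ∀ a b c : E,
    (∃ x, padd a b = some x ∧ (padd x c).isSome) ↔
      (∃ y, padd b c = some y ∧ (padd a y).isSome)
  /-- ... and in this case `(a+b)+c = a+(b+c)`. -/
  assoc_eq : ∀ a b c x y : E, padd a b = some x → padd b c = some y →
    padd x c = padd a y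
  /-- (ii) there is exactly one `d` with `a + d = 1`. -/
  exists_unique_right : ∀ a : E, ∃! d, padd a d = some pone
  /-- (ii) there is exactly one `e` with `e + a = 1`. -/
  exists_unique_left : ∀ a : E, ∃! e, padd e a = some pone
  /-- (iii) if `a+b` exists, there are `d, e` with `a+b = d+a = b+e`. -/
  shift : ∀ a b c : E, padd a b = some c →
    ∃ d e, padd d a = some c ∧ padd b e = some c
  /-- (iv) if `1+a` exists then `a = 0`. -/
  one_add : ∀ a : E, (padd pone a).isSome → a = pzero
  /-- (iv) if `a+1` exists then `a = 0`. -/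
  add_one : ∀ a : E, (padd a pone).isSome → a = pzero

namespace PseudoEffectAlgebra

variable {E : Type} [PseudoEffectAlgebra E]

/-- The induced partial order: `a ≤ b` iff `b = a + c` for some `c ∈ E`. -/
def pLe (a b : E) : Prop := ∃ c, padd a c = some b

/-- The Riesz Decomposition Property (RDP). -/
def RDP (E : Type) [PseudoEffectAlgebra E] : Prop :=
  ∀ a₁ a₂ b₁ b₂ c : E, padd a₁ a₂ = some c → padd b₁ b₂ = some c →
    ∃ d₁ d₂ d₃ d₄ : E, padd d₁ d₂ = some a₁ ∧ padd d₃ d₄ = some a₂ ∧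
      padd d₁ d₃ = some b₁ ∧ padd d₂ d₄ = some b₂

/-- A signed measure on `E`. -/
def IsSignedMeasure (m : E → ℝ) : Prop :=
  ∀ a b c : E, padd a b = some c → m c = m a + m b

/-- A (positive) measure on `E`. -/
def IsMeasure (m : E → ℝ) : Prop :=
  IsSignedMeasure m ∧ ∀ a : E, 0 ≤ m a

/-- A state on `E`. -/
def IsState (s : E → ℝ) : Prop := IsMeasure s ∧ s pone = 1

/-- A Jordan signed measure: a difference of two measures. -/
def IsJordan (m : E → ℝ) : Prop :=
  ∃ m₁ m₂ : E → ℝ, IsMeasure m₁ ∧ IsMeasure m₂ ∧ m = m₁ - m₂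

/-- `m ≤⁺ m'` iff `m' - m` is a (positive) measure. -/
def MLe (m m' : E → ℝ) : Prop := IsMeasure (m' - m)

/-- The (partial) sum `x₁ + ⋯ + xₙ` of a nonempty list of elements of `E`. -/
def lsum : List E → Option E
  | [] => some pzero
  | [a] => some a
  | a :: b :: l => (lsum (b :: l)).bind (fun s => padd a s)

/-- `m` is the supremum, in the po-group `J(E)` of Jordan signed measures ordered
by `≤⁺`, of the set `S`. -/
def IsSupIn (S : Set (E → ℝ)) (m : E → ℝ) : Prop :=
  IsJordan m ∧ (∀ t ∈ S, MLe t m) ∧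
    ∀ h : E → ℝ, IsJordan h → (∀ t ∈ S, MLe t h) → MLe m h

/-- `m` is the infimum, in the po-group `J(E)` of Jordan signed measures ordered
by `≤⁺`, of the set `S`. -/
def IsInfIn (S : Set (E → ℝ)) (m : E → ℝ) : Prop :=
  IsJordan m ∧ (∀ t ∈ S, MLe m t) ∧
    ∀ h : E → ℝ, IsJordan h → (∀ t ∈ S, MLe h t) → MLe h m

variable (E) in
/-- The state space `S(E)`. -/
def stateSet : Set (E → ℝ) := {s | IsState s}

variable (E) in
/-- A face of the convex set `S(E)`. -/
def IsFace (F : Set (E → ℝ)) : Prop :=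
  F ⊆ stateSet E ∧
  (∀ s₁ ∈ F, ∀ s₂ ∈ F, ∀ lam : ℝ, 0 ≤ lam → lam ≤ 1 →
    lam • s₁ + (1 - lam) • s₂ ∈ F) ∧
  (∀ s₁ ∈ stateSet E, ∀ s₂ ∈ stateSet E, ∀ lam : ℝ, 0 < lam → lam < 1 →
    lam • s₁ + (1 - lam) • s₂ ∈ F → s₁ ∈ F ∧ s₂ ∈ F)

variable (E) in
/-- The face of `S(E)` generated by a set `X` (the smallest face containing `X`). -/
def faceGen (X : Set (E → ℝ)) : Set (E → ℝ) :=
  ⋂₀ {F : Set (E → ℝ) | IsFace E F ∧ X ⊆ F}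

lemma isSignedMeasure_of_eq {a b : E → ℝ} (ha : IsSignedMeasure a) (h : a = b) :
    IsSignedMeasure b := h ▸ ha

lemma isMeasure_of_eq {a b : E → ℝ} (ha : IsMeasure a) (h : a = b) :
    IsMeasure b := h ▸ ha

lemma isMeasure_add {a b : E → ℝ} (ha : IsMeasure a) (hb : IsMeasure b) :
    IsMeasure (a + b) := by
  refine ⟨fun x y z h => ?_, fun x => ?_⟩
  · simp only [Pi.add_apply, ha.1 x y z h, hb.1 x y z h]; ring
  · have := ha.2 x; have := hb.2 x; simp only [Pi.add_apply]; linarith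

lemma isJordan_sub {a b : E → ℝ} (ha : IsJordan a) (hb : IsJordan b) :
    IsJordan (a - b) := by
  obtain ⟨a1, a2, ha1, ha2, rfl⟩ := ha
  obtain ⟨b1, b2, hb1, hb2, rfl⟩ := hb
  exact ⟨a1 + b2, a2 + b1, isMeasure_add ha1 hb2, isMeasure_add ha2 hb1, by abel⟩

lemma mle_antisymm {a b : E → ℝ} (h1 : MLe a b) (h2 : MLe b a) : a = b := by
  funext x
  have := h1.2 x; have := h2.2 x
  simp only [Pi.sub_apply] at *
  linarith

lemma measure_le_pone {μ : E → ℝ} (hμ : IsMeasure μ) (a : E) : μ a ≤ μ pone := by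
  obtain ⟨d, hd, -⟩ := exists_unique_right a
  have := hμ.1 a d pone hd
  have := hμ.2 d
  linarith

lemma measure_eq_smul_state (hne : (stateSet E).Nonempty) {μ : E → ℝ}
    (hμ : IsMeasure μ) : ∃ α : ℝ, ∃ s : E → ℝ, 0 ≤ α ∧ IsState s ∧ α • s = μ := by
  by_cases h0 : μ pone = 0
  · obtain ⟨s, hs⟩ := hne
    refine ⟨0, s, le_refl 0, hs, ?_⟩
    funext x
    have h1 := measure_le_pone hμ x
    have h2 := hμ.2 x
    simp only [Pi.smul_apply, smul_eq_mul]
    linarith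
  · have hpos : 0 < μ pone := lt_of_le_of_ne (hμ.2 pone) (Ne.symm h0)
    refine ⟨μ pone, (μ pone)⁻¹ • μ, le_of_lt hpos, ⟨⟨fun x y z h => ?_, fun x => ?_⟩, ?_⟩, ?_⟩
    · simp only [Pi.smul_apply, smul_eq_mul, hμ.1 x y z h]; ring
    · have := hμ.2 x
      have : 0 ≤ (μ pone)⁻¹ := inv_nonneg.2 (le_of_lt hpos)
      simp only [Pi.smul_apply, smul_eq_mul]
      positivity
    · simp only [Pi.smul_apply, smul_eq_mul]
      field_simp
    · funext x
      simp only [Pi.smul_apply, smul_eq_mul]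
      field_simp

/-- formula (4.2) and the Jordan decomposition: every nonzero
Jordan signed measure `m` on a pseudo effect algebra with (RDP) and `S(E) ≠ ∅` has a
unique canonical Jordan decomposition `m = α₁ s₁ - α₂ s₂` with `α₁, α₂ ≥ 0`,
`s₁, s₂` states, `α₁ s₁ = m⁺` and `α₂ s₂ = m⁻`; in particular `m = m⁺ - m⁻`, and for
every decomposition `m = m₁ - m₂` into measures, `m⁺ ≤⁺ m₁` and `m⁻ ≤⁺ m₂`. -/
theorem stmt19 (hRDP : RDP E) (hne : (stateSet E).Nonempty)
    (m : E → ℝ) (hm : IsJordan m) (hm0 : m ≠ 0)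
    (mp mi : E → ℝ)
    (hp : IsSupIn {m, 0} mp)    -- `mp = m⁺ = m ⋁ 0`
    (hi : IsInfIn {m, 0} mi) :  -- `-mi = m⁻ = -(m ⋀ 0)`
    -- existence of the canonical Jordan decomposition:
    (∃ α₁ α₂ : ℝ, ∃ s₁ s₂ : E → ℝ, 0 ≤ α₁ ∧ 0 ≤ α₂ ∧ IsState s₁ ∧ IsState s₂ ∧
      m = α₁ • s₁ - α₂ • s₂ ∧ α₁ • s₁ = mp ∧ α₂ • s₂ = -mi) ∧
    -- its uniqueness (the two summands are determined, being `m⁺` and `m⁻`):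
    (∀ α₁ α₂ β₁ β₂ : ℝ, ∀ s₁ s₂ t₁ t₂ : E → ℝ,
      0 ≤ α₁ → 0 ≤ α₂ → 0 ≤ β₁ → 0 ≤ β₂ →
      IsState s₁ → IsState s₂ → IsState t₁ → IsState t₂ →
      α₁ • s₁ = mp → α₂ • s₂ = -mi → β₁ • t₁ = mp → β₂ • t₂ = -mi →
      α₁ = β₁ ∧ α₂ = β₂ ∧ α₁ • s₁ = β₁ • t₁ ∧ α₂ • s₂ = β₂ • t₂) ∧
    -- `m = m⁺ - m⁻`:
    m = mp - (-mi) ∧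
    -- minimality of the Jordan decomposition:
    (∀ m₁ m₂ : E → ℝ, IsMeasure m₁ → IsMeasure m₂ → m = m₁ - m₂ →
      MLe mp m₁ ∧ MLe (-mi) m₂) := by
  have hmem_m : m ∈ ({m, 0} : Set (E → ℝ)) := Set.mem_insert _ _
  have hmem_0 : (0 : E → ℝ) ∈ ({m, 0} : Set (E → ℝ)) := Set.mem_insert_of_mem _ rfl
  have hmle_m_mp : MLe m mp := hp.2.1 m hmem_m
  have hmle_0_mp : MLe 0 mp := hp.2.1 0 hmem_0
  have hmle_mi_m : MLe mi m := hi.2.1 m hmem_m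
  have hmle_mi_0 : MLe mi 0 := hi.2.1 0 hmem_0
  have hmpMeas : IsMeasure mp := isMeasure_of_eq hmle_0_mp (sub_zero mp)
  have hmiMeas : IsMeasure (-mi) := isMeasure_of_eq hmle_mi_0 (zero_sub mi)
  have hmiJ : IsJordan mi := hi.1
  have hmpJ : IsJordan mp := hp.1
  -- mp = m - mi
  have key : mp = m - mi := by
    apply mle_antisymm
    · -- MLe mp (m - mi) : use sup property of mp
      apply hp.2.2 (m - mi) (isJordan_sub hm hmiJ)
      intro t ht
      rcases ht with rfl | ht
      · exact isMeasure_of_eq hmiMeas (by abel)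
      · rcases ht with rfl
        exact isMeasure_of_eq hmle_mi_m (by abel)
    · -- MLe (m - mi) mp : use inf property of mi with h = m - mp
      have h1 : MLe (m - mp) mi := by
        apply hi.2.2 (m - mp) (isJordan_sub hm hmpJ)
        intro t ht
        rcases ht with rfl | ht
        · exact isMeasure_of_eq hmpMeas (by abel)
        · rcases ht with rfl
          exact isMeasure_of_eq hmle_m_mp (by abel)
      exact isMeasure_of_eq h1 (by abel)
  have hmdiff : m = mp - (-mi) := by
    rw [key]; abel
  obtain ⟨α₁, s₁, hα₁, hs₁, hsm₁⟩ := measure_eq_smul_state hne hmpMeas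
  obtain ⟨α₂, s₂, hα₂, hs₂, hsm₂⟩ := measure_eq_smul_state hne hmiMeas
  refine ⟨⟨α₁, α₂, s₁, s₂, hα₁, hα₂, hs₁, hs₂, ?_, hsm₁, hsm₂⟩, ?_, hmdiff, ?_⟩
  · rw [hsm₁, hsm₂, hmdiff]
  · intro a₁ a₂ b₁ b₂ t₁ t₂ u₁ u₂ _ _ _ _ ht₁ ht₂ hu₁ hu₂ e1 e2 e3 e4
    have he1 : a₁ • t₁ = b₁ • u₁ := by rw [e1, e3]
    have he2 : a₂ • t₂ = b₂ • u₂ := by rw [e2, e4]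
    have hv1 : a₁ = b₁ := by
      have := congrFun he1 pone
      simpa [ht₁.2, hu₁.2] using this
    have hv2 : a₂ = b₂ := by
      have := congrFun he2 pone
      simpa [ht₂.2, hu₂.2] using this
    exact ⟨hv1, hv2, he1, he2⟩
  · intro m₁ m₂ hm₁ hm₂ hsub
    have hub : MLe mp m₁ := by
      apply hp.2.2 m₁ ⟨m₁, 0, hm₁, ⟨fun x y z h => by simp, fun x => le_refl 0⟩, by abel⟩
      intro t ht
      rcases ht with rfl | ht
      · exact isMeasure_of_eq hm₂ (by rw [hsub]; abel)
      · rcases ht with rfl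
        exact isMeasure_of_eq hm₁ (sub_zero m₁).symm
    refine ⟨hub, ?_⟩
    -- -mi = mp - m, m₂ - (-mi) = m₂ - mp + m = m₁ - mp
    have : -mi = mp - m := by rw [key]; abel
    apply isMeasure_of_eq hub
    rw [this, hsub]; abel

end PseudoEffectAlgebra
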